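/- The Equivariant Spatial Module (ESM) layer is E(3)-equivariant: let N be a positive integer, h : Fin N → ℝᶜ be node features, A : Fin N → Fin N → ℝᵐ and c : Fin N → ℝᵀ be position-independent features, 𝒩 : Fin N → Finset (Fin N) assign each node a nonempty neighborhood, and let φ_m : ℝᶜ × ℝᶜ × ℝ × ℝᵐ → ℝᵈ, φ_h : ℝᶜ × ℝᵀ × ℝᵈ → ℝᶜ, φ_x : ℝᵈ → ℝ be arbitrary functions. For positions y : Fin N → ℝ³, define m_{ij}(y) = φ_m(h_i, h_j, ‖y_i - y_j‖², A_{ij}), h'_i(y) = h_i + φ_h(h_i, c_i, Σ_{j ≠ i} m_{ij}(y)), and y'_i = y_i + (1/|𝒩(i)|) Σ_{j ∈ 𝒩(i)} (y_i - y_j) · φ_x(m_{ij}(y)). Then for every real orthogonal 3×3 matrix O and every b ∈ ℝ³, applying the layer to the transformed positions i ↦ O·y_i + b yields h'_i(O·y + b) = h'_i(y) for all i (invariance of features) and output positions equal to O·y'_i + b for all i (equivariance of positions). -/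

import Mathlib

open scoped BigOperators Matrix

/-- The E(3) action `y ↦ O·y + b` on 3-vectors. -/
noncomputable def e3Act (O : Matrix (Fin 3) (Fin 3) ℝ) (b : EuclideanSpace ℝ (Fin 3))
    (v : EuclideanSpace ℝ (Fin 3)) : EuclideanSpace ℝ (Fin 3) :=
  (show EuclideanSpace ℝ (Fin 3) from WithLp.toLp 2 (O.mulVec v)) + b

/-- ESM messages `m_{ij}(y) = φ_m(h_i, h_j, ‖y_i - y_j‖², A_{ij})`. -/
noncomputable def esmMsg {N c d m : ℕ}
    (φm : (Fin c → ℝ) → (Fin c → ℝ) → ℝ → (Fin m → ℝ) → (Fin d → ℝ))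
    (h : Fin N → (Fin c → ℝ)) (A : Fin N → Fin N → (Fin m → ℝ))
    (y : Fin N → EuclideanSpace ℝ (Fin 3)) (i j : Fin N) : Fin d → ℝ :=
  φm (h i) (h j) (‖y i - y j‖ ^ 2) (A i j)

/-- ESM feature update `h'_i(y) = h_i + φ_h(h_i, c_i, Σ_{j ≠ i} m_{ij}(y))`. -/
noncomputable def esmFeat {N c d m τ : ℕ}
    (φm : (Fin c → ℝ) → (Fin c → ℝ) → ℝ → (Fin m → ℝ) → (Fin d → ℝ))
    (φh : (Fin c → ℝ) → (Fin τ → ℝ) → (Fin d → ℝ) → (Fin c → ℝ))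
    (h : Fin N → (Fin c → ℝ)) (A : Fin N → Fin N → (Fin m → ℝ))
    (cf : Fin N → (Fin τ → ℝ))
    (y : Fin N → EuclideanSpace ℝ (Fin 3)) (i : Fin N) : Fin c → ℝ :=
  h i + φh (h i) (cf i) (∑ j ∈ Finset.univ.erase i, esmMsg φm h A y i j)

/-- ESM position update
`y'_i = y_i + (1/|𝒩(i)|) Σ_{j ∈ 𝒩(i)} (y_i - y_j) · φ_x(m_{ij}(y))`. -/
noncomputable def esmPos {N c d m : ℕ}
    (φm : (Fin c → ℝ) → (Fin c → ℝ) → ℝ → (Fin m → ℝ) → (Fin d → ℝ))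
    (φx : (Fin d → ℝ) → ℝ)
    (h : Fin N → (Fin c → ℝ)) (A : Fin N → Fin N → (Fin m → ℝ))
    (𝒩 : Fin N → Finset (Fin N))
    (y : Fin N → EuclideanSpace ℝ (Fin 3)) (i : Fin N) : EuclideanSpace ℝ (Fin 3) :=
  y i + ((𝒩 i).card : ℝ)⁻¹ • ∑ j ∈ 𝒩 i, φx (esmMsg φm h A y i j) • (y i - y j)

lemma mulVec_norm_eq {O : Matrix (Fin 3) (Fin 3) ℝ}
    (hO : O ∈ Matrix.orthogonalGroup (Fin 3) ℝ) (v : EuclideanSpace ℝ (Fin 3)) :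
    ‖(show EuclideanSpace ℝ (Fin 3) from WithLp.toLp 2 (O.mulVec v))‖ = ‖v‖ := by
  have hstar : O.transpose * O = 1 := by simpa [star] using Iff.mp (Matrix.mem_orthogonalGroup_iff' _ _) hO
  rw [EuclideanSpace.norm_eq, EuclideanSpace.norm_eq]
  congr 1
  have : O.mulVec v ⬝ᵥ O.mulVec v = v ⬝ᵥ v := by
    rw [Matrix.dotProduct_mulVec, Matrix.vecMul_mulVec, hstar, Matrix.vecMul_one]
  simpa [dotProduct, Real.norm_eq_abs, sq_abs, pow_two] using this

lemma e3Act_sub {O : Matrix (Fin 3) (Fin 3) ℝ} {b : EuclideanSpace ℝ (Fin 3)}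
    (u v : EuclideanSpace ℝ (Fin 3)) :
    e3Act O b u - e3Act O b v = (show EuclideanSpace ℝ (Fin 3) from WithLp.toLp 2 (O.mulVec (u - v))) := by
  simp only [e3Act]
  have : O.mulVec (u - v) = O.mulVec u - O.mulVec v := by
    rw [Matrix.mulVec_sub]
  rw [this, WithLp.toLp_sub]
  abel

lemma esmMsg_e3 {N c d m : ℕ}
    (φm : (Fin c → ℝ) → (Fin c → ℝ) → ℝ → (Fin m → ℝ) → (Fin d → ℝ))
    (h : Fin N → (Fin c → ℝ)) (A : Fin N → Fin N → (Fin m → ℝ))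
    (y : Fin N → EuclideanSpace ℝ (Fin 3))
    {O : Matrix (Fin 3) (Fin 3) ℝ} (hO : O ∈ Matrix.orthogonalGroup (Fin 3) ℝ)
    (b : EuclideanSpace ℝ (Fin 3)) (i j : Fin N) :
    esmMsg φm h A (fun k => e3Act O b (y k)) i j = esmMsg φm h A y i j := by
  unfold esmMsg
  rw [e3Act_sub, mulVec_norm_eq hO]
  simp only [WithLp.toLp_sub, WithLp.toLp_ofLp]

/-- The Equivariant Spatial Module (ESM) layer is E(3)-equivariant:
for any orthogonal `O` and translation `b`, applying the layer to the transformed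
positions `i ↦ O·y_i + b` leaves the updated features unchanged and transforms the
updated positions by the same `O, b`. -/
theorem esm_E3_equivariant (N c d m τ : ℕ) (hN : 0 < N)
    (h : Fin N → (Fin c → ℝ)) (A : Fin N → Fin N → (Fin m → ℝ))
    (cf : Fin N → (Fin τ → ℝ))
    (𝒩 : Fin N → Finset (Fin N)) (h𝒩 : ∀ i, (𝒩 i).Nonempty)
    (φm : (Fin c → ℝ) → (Fin c → ℝ) → ℝ → (Fin m → ℝ) → (Fin d → ℝ))
    (φh : (Fin c → ℝ) → (Fin τ → ℝ) → (Fin d → ℝ) → (Fin c → ℝ))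
    (φx : (Fin d → ℝ) → ℝ)
    (y : Fin N → EuclideanSpace ℝ (Fin 3))
    (O : Matrix (Fin 3) (Fin 3) ℝ) (hO : O ∈ Matrix.orthogonalGroup (Fin 3) ℝ)
    (b : EuclideanSpace ℝ (Fin 3)) :
    (∀ i, esmFeat φm φh h A cf (fun j => e3Act O b (y j)) i = esmFeat φm φh h A cf y i) ∧
      (∀ i, esmPos φm φx h A 𝒩 (fun j => e3Act O b (y j)) i =
        e3Act O b (esmPos φm φx h A 𝒩 y i)) := by
  constructor
  · intro i
    unfold esmFeat
    have : ∑ j ∈ Finset.univ.erase i, esmMsg φm h A (fun k => e3Act O b (y k)) i j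
        = ∑ j ∈ Finset.univ.erase i, esmMsg φm h A y i j :=
      Finset.sum_congr rfl fun j _ => esmMsg_e3 φm h A y hO b i j
    rw [this]
  · intro i
    unfold esmPos
    have hmsg : ∀ j, esmMsg φm h A (fun k => e3Act O b (y k)) i j = esmMsg φm h A y i j :=
      fun j => esmMsg_e3 φm h A y hO b i j
    have hsum : ∑ j ∈ 𝒩 i, φx (esmMsg φm h A (fun k => e3Act O b (y k)) i j) •
        (e3Act O b (y i) - e3Act O b (y j)) =
        (show EuclideanSpace ℝ (Fin 3) from
          WithLp.toLp 2 (O.mulVec (∑ j ∈ 𝒩 i, φx (esmMsg φm h A y i j) • (y i - y j)))) := by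
      rw [show (O.mulVec (∑ j ∈ 𝒩 i, φx (esmMsg φm h A y i j) • (y i - y j)) : Fin 3 → ℝ)
          = ∑ j ∈ 𝒩 i, O.mulVec (φx (esmMsg φm h A y i j) • (y i - y j)) from by
        induction (𝒩 i) using Finset.induction with
        | empty => simp [Matrix.mulVec_zero]
        | insert _ _ hx ih => rw [Finset.sum_insert hx, Finset.sum_insert hx, Matrix.mulVec_add, ih]]
      rw [WithLp.toLp_sum]
      refine Finset.sum_congr rfl fun j _ => ?_
      rw [hmsg, e3Act_sub]
      rw [Matrix.mulVec_smul, WithLp.toLp_smul]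
    calc e3Act O b (y i) + (((𝒩 i).card : ℝ))⁻¹ •
          ∑ j ∈ 𝒩 i, φx (esmMsg φm h A (fun k => e3Act O b (y k)) i j) •
            (e3Act O b (y i) - e3Act O b (y j))
        = e3Act O b (y i) + (((𝒩 i).card : ℝ))⁻¹ • (show EuclideanSpace ℝ (Fin 3) from
            WithLp.toLp 2 (O.mulVec (∑ j ∈ 𝒩 i, φx (esmMsg φm h A y i j) • (y i - y j)))) := by rw [hsum]
      _ = e3Act O b (esmPos φm φx h A 𝒩 y i) := by
          unfold esmPos e3Act
          have : O.mulVec (y i + (((𝒩 i).card : ℝ))⁻¹ •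
              ∑ j ∈ 𝒩 i, φx (esmMsg φm h A y i j) • (y i - y j)) =
              O.mulVec (y i) + (((𝒩 i).card : ℝ))⁻¹ •
              O.mulVec (∑ j ∈ 𝒩 i, φx (esmMsg φm h A y i j) • (y i - y j)) := by
            rw [Matrix.mulVec_add, Matrix.mulVec_smul]
            simp only [WithLp.ofLp_sum, WithLp.ofLp_smul, WithLp.ofLp_sub]
          rw [WithLp.ofLp_add, WithLp.ofLp_smul, WithLp.ofLp_sum, Matrix.mulVec_add, Matrix.mulVec_smul,
            WithLp.toLp_add, WithLp.toLp_smul]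
          simp only [WithLp.ofLp_smul, WithLp.ofLp_sub]
          abel
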